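/- Let A = A₁ ⊗ ⋯ ⊗ A_q with A_i ∈ ℝ^{n_i×d_i} each of full column rank. Then for any row index (i₁,...,i_q), the leverage score of that row of A equals the product over j of the leverage score of row i_j of A_j. -/
import Mathlib


open Matrix

/-- The Kronecker product of a family of `q` matrices, with rows and columns indexed by
tuples of indices. -/
def kronFamily {q : ℕ} {n d : Fin q → ℕ}
    (A : ∀ i : Fin q, Matrix (Fin (n i)) (Fin (d i)) ℝ) :
    Matrix (∀ i : Fin q, Fin (n i)) (∀ i : Fin q, Fin (d i)) ℝ :=
  fun r c => ∏ i : Fin q, A i (r i) (c i)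

/-- The leverage score of row `i` of a (full column rank) matrix `M`:
`σ_i(M) = eᵢᵀ M (MᵀM)⁻¹ Mᵀ eᵢ`. -/
noncomputable def leverageScore {n d : Type*} [Fintype n] [Fintype d] [DecidableEq n]
    [DecidableEq d] (M : Matrix n d ℝ) (i : n) : ℝ :=
  (M * (Mᵀ * M)⁻¹ * Mᵀ) i i

section Kron

set_option linter.unusedSectionVars false

variable {q : ℕ} {α β γ : Fin q → Type*} [∀ i, Fintype (α i)] [∀ i, Fintype (β i)]
  [∀ i, Fintype (γ i)]

/-- General Kronecker product of a family of matrices. -/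
def kronF (A : ∀ i, Matrix (α i) (β i) ℝ) : Matrix (∀ i, α i) (∀ i, β i) ℝ :=
  fun r c => ∏ i, A i (r i) (c i)

lemma kronF_mul (A : ∀ i, Matrix (α i) (β i) ℝ) (B : ∀ i, Matrix (β i) (γ i) ℝ) :
    kronF A * kronF B = kronF (fun i => A i * B i) := by
  classical
  ext r c
  simp only [Matrix.mul_apply, kronF, ← Finset.prod_mul_distrib]
  rw [Finset.prod_univ_sum, ← Fintype.piFinset_univ]

lemma kronF_transpose (A : ∀ i, Matrix (α i) (β i) ℝ) :
    (kronF A)ᵀ = kronF (fun i => (A i)ᵀ) := rfl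

lemma kronF_one [∀ i, DecidableEq (β i)] :
    kronF (fun i => (1 : Matrix (β i) (β i) ℝ)) = 1 := by
  classical
  ext b c
  simp [kronF, Matrix.one_apply, funext_iff, Fintype.prod_boole]

lemma kronF_inv [∀ i, DecidableEq (β i)] (G : ∀ i, Matrix (β i) (β i) ℝ)
    (h : ∀ i, IsUnit (G i).det) : (kronF G)⁻¹ = kronF (fun i => (G i)⁻¹) := by
  apply Matrix.inv_eq_right_inv
  rw [kronF_mul]
  have : (fun i => G i * (G i)⁻¹) = fun i => (1 : Matrix (β i) (β i) ℝ) := by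
    funext i; exact Matrix.mul_nonsing_inv _ (h i)
  rw [this, kronF_one]

end Kron

lemma isUnit_of_rank_eq_card {m : Type*} [Fintype m] [DecidableEq m]
    (M : Matrix m m ℝ) (h : M.rank = Fintype.card m) : IsUnit M := by
  rw [← Matrix.mulVec_injective_iff_isUnit]
  have hsurj : Function.Surjective M.mulVecLin := by
    rw [← LinearMap.range_eq_top]
    apply Submodule.eq_top_of_finrank_eq
    rw [show Module.finrank ℝ ↥(LinearMap.range M.mulVecLin) = M.rank from rfl, h,
      Module.finrank_pi]
  have hinj := (LinearMap.injective_iff_surjective (f := M.mulVecLin)).mpr hsurj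
  intro x y hxy
  exact hinj hxy

/-- For `A = A₁ ⊗ ⋯ ⊗ A_q` with each `Aᵢ` of full column rank, the leverage score of the row of
`A` indexed by `(i₁, …, i_q)` is the product of the leverage scores of the rows `i_j` of `A_j`. -/
theorem stmt_3 (q : ℕ) (n d : Fin q → ℕ)
    (A : ∀ i : Fin q, Matrix (Fin (n i)) (Fin (d i)) ℝ)
    (hrank : ∀ i : Fin q, (A i).rank = d i)
    (r : ∀ i : Fin q, Fin (n i)) :
    leverageScore (kronFamily A) r = ∏ i : Fin q, leverageScore (A i) (r i) := by
  classical
  have hK : kronFamily A = kronF A := rfl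
  have hGram : ∀ i, IsUnit ((A i)ᵀ * A i).det := by
    intro i
    refine (Matrix.isUnit_iff_isUnit_det _).mp ?_
    apply isUnit_of_rank_eq_card
    rw [Matrix.rank_transpose_mul_self, hrank i, Fintype.card_fin]
  have key : kronF A * ((kronF A)ᵀ * kronF A)⁻¹ * (kronF A)ᵀ
      = kronF (fun i => A i * ((A i)ᵀ * (A i))⁻¹ * (A i)ᵀ) := by
    rw [kronF_transpose, kronF_mul, kronF_inv _ hGram, kronF_mul, kronF_mul]
  unfold leverageScore
  rw [hK, key]
  rfl
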